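/- Let n ≥ 1, let ℱ be a nonempty finite family of nonempty subsets of ℝⁿ, each S ∈ ℱ assigned a number ℓ(S) > 0, and define d_ℱ(x) := inf_{S∈ℱ}(ℓ(S) + dist(x,S)) and d_ℱ(I) := inf_{x∈I} d_ℱ(x) for a dyadic cube I. Let 0 < η < 1 and let 0 < τ < η/(2√n); let 𝒞_ℱ be the collection of maximal dyadic cubes I of ℝⁿ satisfying ℓ(I) < τ d_ℱ(I). Then there is a constant C = C(n,η) ≥ 1 such that for all I, J ∈ 𝒞_ℱ with η⁻¹I ∩ η⁻¹J ≠ ∅ (where η⁻¹I denotes the cube with the same center as I and sidelength η⁻¹ℓ(I)), one has C⁻¹ ℓ(J) ≤ ℓ(I) ≤ C ℓ(J). -/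

import Mathlib

open MeasureTheory Metric Set
open scoped ENNReal NNReal

noncomputable section

namespace QCMGP

abbrev Euc (n : ℕ) := EuclideanSpace ℝ (Fin n)

/-- The `d`-dimensional Hausdorff content `ℋ^d_∞`. -/
def hcontent (n : ℕ) (d : ℝ) (A : Set (Euc n)) : ℝ≥0∞ :=
  ⨅ (U : ℕ → Set (Euc n)) (_ : A ⊆ ⋃ i, U i), ∑' i, EMetric.diam (U i) ^ d

/-- `E` is `(c,d)`-lower content regular: `ℋ^d_∞(E ∩ B(x,r)) ≥ c rᵈ` for all `x ∈ E`
and `0 < r < diam E`. -/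
def LowerContentRegular (n : ℕ) (c d : ℝ) (E : Set (Euc n)) : Prop :=
  ∀ x ∈ E, ∀ r : ℝ, 0 < r → ENNReal.ofReal r < EMetric.diam E →
    ENNReal.ofReal c * ENNReal.ofReal r ^ d ≤ hcontent n d (E ∩ ball x r)

/-- Normalized local Hausdorff distance `d_B(A,B)` for the ball `B = B(x,r)`
(the factor `2 / diam B` equals `r⁻¹`). -/
def ndist (n : ℕ) (x : Euc n) (r : ℝ) (A B : Set (Euc n)) : ℝ :=
  r⁻¹ * max (⨆ y : ↥(A ∩ ball x r), Metric.infDist y.1 B)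
            (⨆ y : ↥(B ∩ ball x r), Metric.infDist y.1 A)

/-- `L` is a `d`-plane: a nonempty `d`-dimensional affine subspace. -/
def IsPlane (n d : ℕ) (L : AffineSubspace ℝ (Euc n)) : Prop :=
  (L : Set (Euc n)).Nonempty ∧ Module.finrank ℝ L.direction = d

/-- `U` is a union of `d`-planes. -/
def IsUnionOfPlanes (n d : ℕ) (U : Set (Euc n)) : Prop :=
  ∃ Ps : Set (AffineSubspace ℝ (Euc n)),
    (∀ L ∈ Ps, IsPlane n d L) ∧ U = ⋃ L ∈ Ps, (L : Set (Euc n))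

/-- `β_E^{d,p}(B(x,r), L)`. -/
def betaPlane (n d : ℕ) (p : ℝ) (E : Set (Euc n)) (x : Euc n) (r : ℝ)
    (L : AffineSubspace ℝ (Euc n)) : ℝ≥0∞ :=
  ((ENNReal.ofReal r ^ (d : ℝ))⁻¹ *
    ∫⁻ t in Set.Ioo (0 : ℝ) 1,
      hcontent n d {y | y ∈ ball x r ∩ E ∧ t * r < Metric.infDist y (L : Set (Euc n))} *
        ENNReal.ofReal (t ^ (p - 1))) ^ (1 / p)

/-- `β_E^{d,p}(B(x,r))`. -/
def beta (n d : ℕ) (p : ℝ) (E : Set (Euc n)) (x : Euc n) (r : ℝ) : ℝ≥0∞ :=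
  ⨅ (L : AffineSubspace ℝ (Euc n)) (_ : IsPlane n d L), betaPlane n d p E x r L

/-- A system of Christ–David cubes for `E`, with parameter `ρ ∈ (0,1/1000)` and
`c₀ = 1/500`.  A cube is recorded together with its scale `k`; its sidelength is
`ℓ(Q) = 5 ρ^k`. -/
structure CDS (n : ℕ) (E : Set (Euc n)) where
  ρ : ℝ
  ρ_pos : 0 < ρ
  ρ_small : ρ < 1 / 1000
  cubes : Set (ℤ × Set (Euc n))
  center : ℤ × Set (Euc n) → Euc n
  borel : ∀ Q ∈ cubes, MeasurableSet Q.2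
  subset_amb : ∀ Q ∈ cubes, Q.2 ⊆ E
  cover : ∀ k : ℤ, ∀ x ∈ E, ∃! Q, Q ∈ cubes ∧ Q.1 = k ∧ x ∈ Q.2
  nested : ∀ Q ∈ cubes, ∀ Q' ∈ cubes, (Q.2 ∩ Q'.2).Nonempty → Q.2 ⊆ Q'.2 ∨ Q'.2 ⊆ Q.2
  center_mem : ∀ Q ∈ cubes, center Q ∈ Q.2
  ball_subset : ∀ Q ∈ cubes, ball (center Q) ((1 / 500) * (5 * ρ ^ Q.1)) ∩ E ⊆ Q.2
  subset_ball : ∀ Q ∈ cubes, Q.2 ⊆ ball (center Q) (5 * ρ ^ Q.1)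

/-- The sidelength `ℓ(Q) = 5 ρ^k` of a cube. -/
def CDS.len {n : ℕ} {E : Set (Euc n)} (𝒟 : CDS n E) (Q : ℤ × Set (Euc n)) : ℝ :=
  5 * 𝒟.ρ ^ Q.1

/-- `β_{E,A,p}(R) = ℓ(R)^d + Σ_{Q ⊆ R} β_E^{d,p}(A B_Q)² ℓ(Q)^d`. -/
def CDS.betaSum {n : ℕ} {E : Set (Euc n)} (𝒟 : CDS n E) (d : ℕ) (A p : ℝ)
    (R : ℤ × Set (Euc n)) : ℝ≥0∞ :=
  ENNReal.ofReal (𝒟.len R) ^ (d : ℝ) +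
    ∑' Q : {Q : ℤ × Set (Euc n) // Q ∈ 𝒟.cubes ∧ Q.2 ⊆ R.2},
      beta n d p E (𝒟.center Q.1) (A * 𝒟.len Q.1) ^ 2 *
        ENNReal.ofReal (𝒟.len Q.1) ^ (d : ℝ)

/-- `Σ_{Q ⊆ R, Q bad} ℓ(Q)^d`, the sum of `ℓ(Q)^d` over the subcubes of `R`
satisfying the "bad cube" condition `P`. -/
def CDS.badSum {n : ℕ} {E : Set (Euc n)} (𝒟 : CDS n E) (d : ℕ)
    (R : ℤ × Set (Euc n)) (P : ℤ × Set (Euc n) → Prop) : ℝ≥0∞ :=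
  ∑' Q : {Q : ℤ × Set (Euc n) // Q ∈ 𝒟.cubes ∧ Q.2 ⊆ R.2 ∧ P Q},
    ENNReal.ofReal (𝒟.len Q.1) ^ (d : ℝ)

/-- The sphere of radius `s` centered at `z` inside the affine subspace `W`. -/
def sphereIn (n : ℕ) (W : AffineSubspace ℝ (Euc n)) (z : Euc n) (s : ℝ) : Set (Euc n) :=
  Metric.sphere z s ∩ (W : Set (Euc n))

/-- The pair `(x,r)` is `ε`-GWEC-bad for `F`: there is an `(n-d-1)`-dimensional sphere
`S ⊆ B(x,r)` with `dist(S,F) > εr`, contractible to a point inside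
`{y ∈ B(x,r) : dist(y,F) > εr}`, whose convex hull meets `F`. -/
def GWECBad (n d : ℕ) (ε : ℝ) (F : Set (Euc n)) (x : Euc n) (r : ℝ) : Prop :=
  ∃ (W : AffineSubspace ℝ (Euc n)) (z : Euc n) (s : ℝ),
    z ∈ W ∧ 0 < s ∧ Module.finrank ℝ W.direction = n - d ∧
    sphereIn n W z s ⊆ ball x r ∧
    (ENNReal.ofReal (ε * r) < ⨅ y ∈ sphereIn n W z s, EMetric.infEdist y F) ∧
    (∃ H : Euc n × ℝ → Euc n,
      ContinuousOn H (sphereIn n W z s ×ˢ Set.Icc (0 : ℝ) 1) ∧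
      (∀ q ∈ sphereIn n W z s ×ˢ Set.Icc (0 : ℝ) 1,
        H q ∈ ball x r ∧ ε * r < Metric.infDist (H q) F) ∧
      (∀ y ∈ sphereIn n W z s, H (y, 0) = y) ∧
      (∃ y₀ : Euc n, ∀ y ∈ sphereIn n W z s, H (y, 1) = y₀)) ∧
    (convexHull ℝ (sphereIn n W z s) ∩ F).Nonempty

/-- `F` is Ahlfors `d`-regular with constant `A ≥ 1`. -/
def AhlforsRegular (n : ℕ) (d A : ℝ) (F : Set (Euc n)) : Prop :=
  1 ≤ A ∧ ∀ x ∈ F, ∀ r : ℝ, 0 < r → ENNReal.ofReal r < EMetric.diam F →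
    ENNReal.ofReal (r ^ d / A) ≤ μH[d] (F ∩ ball x r) ∧
      μH[d] (F ∩ ball x r) ≤ ENNReal.ofReal (A * r ^ d)

/-- `F` is uniformly rectifiable: Ahlfors `d`-regular with big pieces of Lipschitz images. -/
def UnifRect (n d : ℕ) (F : Set (Euc n)) : Prop :=
  (∃ A : ℝ, AhlforsRegular n d A F) ∧
    ∃ (L : ℝ≥0) (θ : ℝ), 0 < L ∧ 0 < θ ∧
      ∀ x ∈ F, ∀ r : ℝ, 0 < r → ENNReal.ofReal r < EMetric.diam F →
        ∃ f : EuclideanSpace ℝ (Fin d) → Euc n, LipschitzWith L f ∧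
          ENNReal.ofReal (θ * r ^ (d : ℝ)) ≤ μH[(d : ℝ)] (f '' Set.univ ∩ ball x r)

/-- The measure `1_ℬ(x,r) (dr/r) dℋ^d|_F(x)` is a Carleson measure on `F × (0,∞)`. -/
def CarlesonBad (n : ℕ) (d : ℝ) (F : Set (Euc n)) (ℬ : Set (Euc n × ℝ)) : Prop :=
  ∃ M : ℝ, 0 ≤ M ∧ ∀ x ∈ F, ∀ r : ℝ, 0 < r → ENNReal.ofReal r ≤ EMetric.diam F →
    (∫⁻ y in ball x r ∩ F,
        ∫⁻ s in Set.Ioo (0 : ℝ) r,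
          Set.indicator ℬ (fun q => (ENNReal.ofReal q.2)⁻¹) (y, s) ∂μH[d])
      ≤ ENNReal.ofReal (M * r ^ d)

/-- `Q ⊆ R` for scaled cubes: `Q` is contained in `R` and has smaller or equal scale. -/
def cubeLE {n : ℕ} (Q R : ℤ × Set (Euc n)) : Prop := R.1 ≤ Q.1 ∧ Q.2 ⊆ R.2

/-- `Q'` is a child of `Q`. -/
def CDS.child {n : ℕ} {E : Set (Euc n)} (𝒟 : CDS n E) (Q Q' : ℤ × Set (Euc n)) : Prop :=
  Q' ∈ 𝒟.cubes ∧ Q'.1 = Q.1 + 1 ∧ Q'.2 ⊆ Q.2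

/-- `𝒯` is a stopping-time region with maximal cube `top`. -/
def CDS.IsStoppingTime {n : ℕ} {E : Set (Euc n)} (𝒟 : CDS n E)
    (𝒯 : Set (ℤ × Set (Euc n))) (top : ℤ × Set (Euc n)) : Prop :=
  𝒯 ⊆ 𝒟.cubes ∧ top ∈ 𝒯 ∧ (∀ Q ∈ 𝒯, cubeLE Q top) ∧
    (∀ Q ∈ 𝒯, ∀ R ∈ 𝒟.cubes, cubeLE Q R → cubeLE R top → R ∈ 𝒯) ∧
    (∀ Q ∈ 𝒯, (∃ Q', 𝒟.child Q Q' ∧ Q' ∉ 𝒯) → ∀ Q', 𝒟.child Q Q' → Q' ∉ 𝒯)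

/-- The minimal cubes of a collection `𝒯` of cubes. -/
def minCubes {n : ℕ} (𝒯 : Set (ℤ × Set (Euc n))) : Set (ℤ × Set (Euc n)) :=
  {Q ∈ 𝒯 | ∀ Q' ∈ 𝒯, cubeLE Q' Q → Q' = Q}

/-- `d_ℱ(x) = inf_{S ∈ ℱ} (ℓ(S) + dist(x,S))` for a family `ℱ` of Christ–David cubes. -/
def CDS.dFam {n : ℕ} {E : Set (Euc n)} (𝒟 : CDS n E)
    (ℱ : Set (ℤ × Set (Euc n))) (x : Euc n) : ℝ :=
  ⨅ S : ℱ, (𝒟.len S.1 + Metric.infDist x S.1.2)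

/-- The (half-open) dyadic cube of ℝⁿ of sidelength `2^{-m}` indexed by `k`. -/
def dyC (n : ℕ) (m : ℤ) (k : Fin n → ℤ) : Set (Euc n) :=
  {x | ∀ i, (k i : ℝ) * (2 : ℝ) ^ (-m) ≤ x i ∧ x i < ((k i : ℝ) + 1) * (2 : ℝ) ^ (-m)}

/-- The `d`-dimensional skeleton of the (closed) dyadic cube indexed by `(m,k)`:
the union of its `d`-dimensional faces. -/
def skel (n d : ℕ) (m : ℤ) (k : Fin n → ℤ) : Set (Euc n) :=
  ⋃ (F : Finset (Fin n)) (_ : F.card = d) (ε : Fin n → Fin 2),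
    {x | (∀ i ∈ F, (k i : ℝ) * (2 : ℝ) ^ (-m) ≤ x i ∧
            x i ≤ ((k i : ℝ) + 1) * (2 : ℝ) ^ (-m)) ∧
      ∀ i ∉ F, x i = ((k i : ℝ) + ((ε i : ℕ) : ℝ)) * (2 : ℝ) ^ (-m)}

/-- The concentric dilate `η⁻¹ I` of the dyadic cube indexed by `(m,k)`. -/
def dilC (n : ℕ) (η : ℝ) (m : ℤ) (k : Fin n → ℤ) : Set (Euc n) :=
  {x | ∀ i, |x i - ((k i : ℝ) + 1 / 2) * (2 : ℝ) ^ (-m)| ≤ η⁻¹ * (2 : ℝ) ^ (-m) / 2}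

/-- The dyadic cube `I` is maximal with property `P`: it has `P`, and no dyadic
cube properly containing it has `P`. -/
def MaxWith (n : ℕ) (P : ℤ × (Fin n → ℤ) → Prop) (I : ℤ × (Fin n → ℤ)) : Prop :=
  P I ∧ ∀ J : ℤ × (Fin n → ℤ), dyC n I.1 I.2 ⊆ dyC n J.1 J.2 →
    dyC n J.1 J.2 ≠ dyC n I.1 I.2 → ¬ P J

/-- `d_ℱ(x) = inf_{S ∈ ℱ} (ℓ(S) + dist(x,S))` for a finite family of sets with
assigned sizes. -/
def dGen (n : ℕ) (ℱ : Finset (Set (Euc n))) (Lf : Set (Euc n) → ℝ) (x : Euc n) : ℝ :=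
  ⨅ S : ℱ, (Lf S.1 + Metric.infDist x S.1)

/-- `d_ℱ(I) = inf_{x ∈ I} d_ℱ(x)` over a dyadic cube `I`. -/
def dGenI (n : ℕ) (ℱ : Finset (Set (Euc n))) (Lf : Set (Euc n) → ℝ)
    (I : ℤ × (Fin n → ℤ)) : ℝ :=
  ⨅ x : dyC n I.1 I.2, dGen n ℱ Lf x.1

/-- The unit cube `[0,1]ⁿ`. -/
def unitCube (n : ℕ) : Set (Euc n) := {x | ∀ i, x i ∈ Set.Icc (0 : ℝ) 1}



/-! ### Auxiliary lemmas for `stmt7` -/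

lemma two_zpow_pos' (m : ℤ) : (0:ℝ) < (2:ℝ)^(-m) := by positivity

lemma zpow_pred' (m : ℤ) : (2:ℝ)^(-(m-1)) = 2 * (2:ℝ)^(-m) := by
  have : -(m-1) = -m + 1 := by ring
  rw [this, zpow_add₀ (by norm_num : (2:ℝ) ≠ 0), zpow_one]; ring

lemma dyC_nonempty' (n : ℕ) (m : ℤ) (k : Fin n → ℤ) : (dyC n m k).Nonempty := by
  refine ⟨WithLp.toLp 2 (fun i => (k i : ℝ) * (2:ℝ)^(-m)), fun i => ?_⟩
  simp only [PiLp.toLp_apply]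
  have := two_zpow_pos' m
  exact ⟨le_refl _, by nlinarith⟩

lemma dist_le_of_coord' (n : ℕ) (x y : Euc n) (c : ℝ) (hc : 0 ≤ c)
    (h : ∀ i, |x i - y i| ≤ c) : dist x y ≤ Real.sqrt n * c := by
  rw [EuclideanSpace.dist_eq]
  have h1 : ∑ i, dist (x i) (y i) ^ 2 ≤ (n:ℝ) * c^2 := by
    calc ∑ i, dist (x i) (y i)^2 ≤ ∑ _i : Fin n, c^2 := by
          apply Finset.sum_le_sum; intro i _
          have := h i
          rw [Real.dist_eq]
          nlinarith [abs_nonneg (x i - y i)]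
      _ = n * c^2 := by simp [Finset.sum_const]
  calc Real.sqrt (∑ i, dist (x i) (y i)^2) ≤ Real.sqrt ((n:ℝ)*c^2) := Real.sqrt_le_sqrt h1
    _ = Real.sqrt n * c := by rw [Real.sqrt_mul (Nat.cast_nonneg n), Real.sqrt_sq hc]

lemma dist_le_of_mem_dyC' {n : ℕ} {m : ℤ} {k : Fin n → ℤ} {x y : Euc n}
    (hx : x ∈ dyC n m k) (hy : y ∈ dyC n m k) :
    dist x y ≤ Real.sqrt n * (2:ℝ)^(-m) := by
  apply dist_le_of_coord' n x y _ (two_zpow_pos' m).le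
  intro i
  obtain ⟨h1, h2⟩ := hx i
  obtain ⟨h3, h4⟩ := hy i
  rw [abs_le]; constructor <;> nlinarith

lemma coord_dist_dilC' {n : ℕ} {η : ℝ} {m : ℤ} {k : Fin n → ℤ} (hη0 : 0 < η) (hη1 : η ≤ 1)
    {x z : Euc n} (hx : x ∈ dyC n m k) (hz : z ∈ dilC n η m k) (i : Fin n) :
    |x i - z i| ≤ η⁻¹ * (2:ℝ)^(-m) := by
  set s := (2:ℝ)^(-m) with hs
  have hsp := two_zpow_pos' m
  have hηinv : 1 ≤ η⁻¹ := (one_le_inv_iff₀).mpr ⟨hη0, hη1⟩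
  obtain ⟨h1, h2⟩ := hx i
  have h3 := hz i
  have hxc : |x i - ((k i : ℝ) + 1/2) * s| ≤ s / 2 := by
    rw [abs_le]; constructor <;> nlinarith
  calc |x i - z i| ≤ |x i - ((k i : ℝ) + 1/2) * s| + |((k i : ℝ) + 1/2) * s - z i| :=
        abs_sub_le _ _ _
    _ ≤ s/2 + η⁻¹ * s / 2 := by
        rw [abs_sub_comm (((k i : ℝ) + 1/2) * s) (z i)]
        exact add_le_add hxc h3
    _ ≤ η⁻¹ * s := by nlinarith

lemma parent_subset' {n : ℕ} (m : ℤ) (k : Fin n → ℤ) :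
    dyC n m k ⊆ dyC n (m-1) (fun i => k i / 2) := by
  intro x hx i
  have hsp := two_zpow_pos' m
  obtain ⟨h1, h2⟩ := hx i
  have hk : 2 * (k i / 2) ≤ k i ∧ k i ≤ 2 * (k i / 2) + 1 := by omega
  have c1 : ((2 * (k i / 2) : ℤ) : ℝ) ≤ (k i : ℝ) := by exact_mod_cast hk.1
  have c2 : ((k i : ℝ) + 1) ≤ ((2 * (k i / 2) + 2 : ℤ) : ℝ) := by
    push_cast; push_cast at c1 ⊢; have := hk.2; have h' : k i + 1 ≤ 2 * (k i / 2) + 2 := by omega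
    have h'' := (Int.cast_le (R := ℝ)).mpr h'; push_cast at h'' ⊢; linarith
  constructor
  · rw [zpow_pred']; push_cast at c1 ⊢; nlinarith
  · rw [zpow_pred']; push_cast at c2 ⊢; nlinarith

lemma parent_ne' {n : ℕ} (hn : 1 ≤ n) (m : ℤ) (k : Fin n → ℤ) :
    dyC n (m-1) (fun i => k i / 2) ≠ dyC n m k := by
  set i₀ : Fin n := ⟨0, hn⟩
  set s := (2:ℝ)^(-m) with hs
  have hsp := two_zpow_pos' m
  set q := k i₀ / 2
  set r := k i₀ % 2
  have hqr : k i₀ = 2*q + r ∧ 0 ≤ r ∧ r ≤ 1 := by omega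
  set y : Euc n := WithLp.toLp 2 (fun i => if i = i₀ then ((2*q + 1 - r : ℤ) : ℝ) * s else (k i : ℝ) * s)
    with hy
  have hymem : y ∈ dyC n (m-1) (fun i => k i / 2) := by
    intro i
    rw [zpow_pred']
    by_cases hi : i = i₀
    · have hv : y i = ((2*q + 1 - r : ℤ) : ℝ) * s := if_pos hi
      rw [hv, hi]
      have hc : ((2*(k i₀ / 2) : ℤ):ℝ) ≤ ((2*q+1-r : ℤ):ℝ) ∧
          ((2*q+1-r : ℤ):ℝ) < ((2*(k i₀ / 2)+2 : ℤ):ℝ) := by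
        constructor <;> exact_mod_cast by omega
      push_cast at hc ⊢
      constructor <;> nlinarith [hc.1, hc.2]
    · have hv : y i = (k i : ℝ) * s := if_neg hi
      rw [hv]
      have hc : ((2*(k i / 2) : ℤ):ℝ) ≤ ((k i : ℤ):ℝ) ∧
          ((k i : ℤ):ℝ) < ((2*(k i / 2)+2 : ℤ):ℝ) := by
        constructor <;> exact_mod_cast by omega
      push_cast at hc ⊢
      constructor <;> nlinarith [hc.1, hc.2]
  have hynmem : y ∉ dyC n m k := by
    intro hmem
    obtain ⟨h1, h2⟩ := hmem i₀
    have hyv : y i₀ = ((2*q + 1 - r : ℤ) : ℝ) * s := by rw [hy, PiLp.toLp_apply]; exact if_pos rfl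
    rw [hyv] at h1 h2
    have e1 : (k i₀ : ℝ) ≤ ((2*q+1-r : ℤ):ℝ) := le_of_mul_le_mul_right h1 hsp
    have e2 : ((2*q+1-r : ℤ):ℝ) < (k i₀ : ℝ) + 1 := lt_of_mul_lt_mul_right h2 hsp.le
    have e1' : (k i₀ : ℤ) ≤ 2*q+1-r := by exact_mod_cast e1
    have e2' : (2*q+1-r : ℤ) < k i₀ + 1 := by exact_mod_cast e2
    omega
  intro heq
  rw [heq] at hymem
  exact hynmem hymem

lemma dGen_bdd' {n : ℕ} {ℱ : Finset (Set (Euc n))} {Lf : Set (Euc n) → ℝ}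
    (hLf : ∀ S ∈ ℱ, 0 < Lf S) (x : Euc n) :
    BddBelow (Set.range fun S : ℱ => Lf S.1 + Metric.infDist x S.1) :=
  ⟨0, by rintro _ ⟨S, rfl⟩; exact add_nonneg (hLf S.1 S.2).le Metric.infDist_nonneg⟩

lemma dGen_nonneg' {n : ℕ} {ℱ : Finset (Set (Euc n))} {Lf : Set (Euc n) → ℝ}
    (hLf : ∀ S ∈ ℱ, 0 < Lf S) (x : Euc n) : 0 ≤ dGen n ℱ Lf x :=
  Real.iInf_nonneg fun S => add_nonneg (hLf S.1 S.2).le Metric.infDist_nonneg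

lemma dGen_lip' {n : ℕ} {ℱ : Finset (Set (Euc n))} {Lf : Set (Euc n) → ℝ}
    (hFne : ℱ.Nonempty) (hLf : ∀ S ∈ ℱ, 0 < Lf S) (x y : Euc n) :
    dGen n ℱ Lf x ≤ dGen n ℱ Lf y + dist x y := by
  have : Nonempty ↥ℱ := Finset.nonempty_coe_sort.mpr hFne
  have h : dGen n ℱ Lf x - dist x y ≤ dGen n ℱ Lf y := by
    refine le_ciInf fun S => ?_
    have h1 : dGen n ℱ Lf x ≤ Lf S.1 + Metric.infDist x S.1 := ciInf_le (dGen_bdd' hLf x) S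
    have h2 : Metric.infDist x S.1 ≤ Metric.infDist y S.1 + dist x y :=
      Metric.infDist_le_infDist_add_dist
    linarith
  linarith

lemma dGenI_cross' {n : ℕ} {ℱ : Finset (Set (Euc n))} {Lf : Set (Euc n) → ℝ}
    (hFne : ℱ.Nonempty) (hLf : ∀ S ∈ ℱ, 0 < Lf S)
    (I J : ℤ × (Fin n → ℤ)) (D : ℝ)
    (hD : ∀ x ∈ dyC n I.1 I.2, ∀ y ∈ dyC n J.1 J.2, dist x y ≤ D) :
    dGenI n ℱ Lf I ≤ dGenI n ℱ Lf J + D := by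
  obtain ⟨x₀, hx₀⟩ := dyC_nonempty' n I.1 I.2
  have hne : Nonempty ↥(dyC n J.1 J.2) := (dyC_nonempty' n J.1 J.2).to_subtype
  have h1 : dGenI n ℱ Lf I ≤ dGen n ℱ Lf x₀ :=
    ciInf_le ⟨0, by rintro _ ⟨y, rfl⟩; exact dGen_nonneg' hLf y.1⟩
      (⟨x₀, hx₀⟩ : ↥(dyC n I.1 I.2))
  have h3 : dGen n ℱ Lf x₀ - D ≤ dGenI n ℱ Lf J := by
    refine le_ciInf fun y => ?_
    have := dGen_lip' hFne hLf x₀ y.1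
    have := hD x₀ hx₀ y.1 y.2
    linarith
  linarith

lemma oneSide' {n : ℕ} (hn : 1 ≤ n) {η : ℝ} (hη0 : 0 < η) (hη1 : η < 1)
    {ℱ : Finset (Set (Euc n))} (hFne : ℱ.Nonempty)
    {Lf : Set (Euc n) → ℝ} (hLf : ∀ S ∈ ℱ, 0 < Lf S)
    {τ : ℝ} (hτ0 : 0 < τ) (hτ : τ < η / (2 * Real.sqrt n))
    (I J : ℤ × (Fin n → ℤ))
    (hI : MaxWith n (fun I' => (2 : ℝ) ^ (-I'.1) < τ * dGenI n ℱ Lf I') I)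
    (hJ : MaxWith n (fun I' => (2 : ℝ) ^ (-I'.1) < τ * dGenI n ℱ Lf I') J)
    (hmeet : (dilC n η I.1 I.2 ∩ dilC n η J.1 J.2).Nonempty) :
    (2:ℝ)^(-J.1) ≤ 8 * (2:ℝ)^(-I.1) := by
  set R := Real.sqrt n with hRdef
  have hR1 : 1 ≤ R := by
    rw [hRdef, show (1:ℝ) = Real.sqrt 1 by rw [Real.sqrt_one]]
    exact Real.sqrt_le_sqrt (by exact_mod_cast hn)
  have hR0 : (0:ℝ) < R := lt_of_lt_of_le one_pos hR1
  set a := (2:ℝ)^(-I.1) with hadef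
  set b := (2:ℝ)^(-J.1) with hbdef
  have ha : 0 < a := two_zpow_pos' I.1
  have hb : 0 < b := two_zpow_pos' J.1
  -- τ R < η/2 < 1/2, and τ R η⁻¹ < 1/2
  have hτR : τ * R < η / 2 := by
    have h1 : τ * R < (η / (2 * R)) * R := mul_lt_mul_of_pos_right hτ hR0
    have h2 : (η / (2 * R)) * R = η / 2 := by
      field_simp
    linarith
  have hτR2 : τ * R < 1/2 := by linarith
  have hτRη : τ * R * η⁻¹ ≤ 1/2 := by
    have h1 : τ * R * η⁻¹ < (η/2) * η⁻¹ := mul_lt_mul_of_pos_right hτR (inv_pos.mpr hη0)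
    have h2 : (η/2) * η⁻¹ = 1/2 := by field_simp
    linarith
  -- upper bound on τ * dGenI I via the parent cube
  set K : Fin n → ℤ := fun i => I.2 i / 2 with hKdef
  have hsub : dyC n I.1 I.2 ⊆ dyC n (I.1 - 1) K := parent_subset' I.1 I.2
  have hne : dyC n (I.1 - 1) K ≠ dyC n I.1 I.2 := parent_ne' hn I.1 I.2
  have hPar : τ * dGenI n ℱ Lf (I.1 - 1, K) ≤ (2:ℝ)^(-(I.1 - 1)) :=
    not_lt.mp (hI.2 (I.1 - 1, K) hsub hne)
  have hPar2 : τ * dGenI n ℱ Lf (I.1 - 1, K) ≤ 2 * a := by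
    rw [zpow_pred'] at hPar; exact hPar
  have hcrossP : dGenI n ℱ Lf I ≤ dGenI n ℱ Lf (I.1 - 1, K) + R * (2 * a) := by
    apply dGenI_cross' hFne hLf
    intro x hx y hy
    have := dist_le_of_mem_dyC' (m := I.1 - 1) (k := K) (hsub hx) hy
    rw [zpow_pred'] at this
    calc dist x y ≤ R * (2 * (2:ℝ)^(-I.1)) := this
      _ = R * (2 * a) := by rw [hadef]
  have hdI : τ * dGenI n ℱ Lf I ≤ 3 * a := by
    have h5 : τ * dGenI n ℱ Lf I ≤ τ * (dGenI n ℱ Lf (I.1 - 1, K) + R * (2 * a)) :=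
      mul_le_mul_of_nonneg_left hcrossP hτ0.le
    have h6 : τ * (dGenI n ℱ Lf (I.1 - 1, K) + R * (2 * a)) =
        τ * dGenI n ℱ Lf (I.1 - 1, K) + (τ * R) * (2 * a) := by ring
    have h7 : (τ * R) * (2 * a) ≤ (1/2) * (2 * a) :=
      mul_le_mul_of_nonneg_right hτR2.le (by positivity)
    linarith
  -- cross bound
  obtain ⟨z, hzI, hzJ⟩ := hmeet
  have hcross : dGenI n ℱ Lf J ≤ dGenI n ℱ Lf I + R * (η⁻¹ * b + η⁻¹ * a) := by
    apply dGenI_cross' hFne hLf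
    intro x hx y hy
    apply dist_le_of_coord' n x y _ (by positivity)
    intro i
    have h1 : |x i - z i| ≤ η⁻¹ * b := coord_dist_dilC' hη0 hη1.le hx hzJ i
    have h2 : |y i - z i| ≤ η⁻¹ * a := coord_dist_dilC' hη0 hη1.le hy hzI i
    calc |x i - y i| ≤ |x i - z i| + |z i - y i| := abs_sub_le _ _ _
      _ ≤ η⁻¹ * b + η⁻¹ * a := by rw [abs_sub_comm (z i) (y i)]; exact add_le_add h1 h2
  have hPJ : b < τ * dGenI n ℱ Lf J := hJ.1
  have h5 : τ * dGenI n ℱ Lf J ≤ τ * (dGenI n ℱ Lf I + R * (η⁻¹ * b + η⁻¹ * a)) :=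
    mul_le_mul_of_nonneg_left hcross hτ0.le
  have h6 : τ * (dGenI n ℱ Lf I + R * (η⁻¹ * b + η⁻¹ * a)) =
      τ * dGenI n ℱ Lf I + (τ * R * η⁻¹) * b + (τ * R * η⁻¹) * a := by ring
  have h7 : (τ * R * η⁻¹) * b ≤ (1/2) * b := mul_le_mul_of_nonneg_right hτRη hb.le
  have h8 : (τ * R * η⁻¹) * a ≤ (1/2) * a := mul_le_mul_of_nonneg_right hτRη ha.le
  linarith

theorem stmt7 (n : ℕ) (hn : 1 ≤ n) (η : ℝ) (hη0 : 0 < η) (hη1 : η < 1) :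
    ∃ C : ℝ, 1 ≤ C ∧
      ∀ (ℱ : Finset (Set (Euc n))), ℱ.Nonempty → (∀ S ∈ ℱ, S.Nonempty) →
      ∀ Lf : Set (Euc n) → ℝ, (∀ S ∈ ℱ, 0 < Lf S) →
      ∀ τ : ℝ, 0 < τ → τ < η / (2 * Real.sqrt n) →
      ∀ I J : ℤ × (Fin n → ℤ),
        MaxWith n (fun I' => (2 : ℝ) ^ (-I'.1) < τ * dGenI n ℱ Lf I') I →
        MaxWith n (fun I' => (2 : ℝ) ^ (-I'.1) < τ * dGenI n ℱ Lf I') J →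
        (dilC n η I.1 I.2 ∩ dilC n η J.1 J.2).Nonempty →
        C⁻¹ * (2 : ℝ) ^ (-J.1) ≤ (2 : ℝ) ^ (-I.1) ∧
          (2 : ℝ) ^ (-I.1) ≤ C * (2 : ℝ) ^ (-J.1) := by
  refine ⟨8, by norm_num, ?_⟩
  intro ℱ hFne _hSne Lf hLf τ hτ0 hτ I J hI hJ hmeet
  have h1 : (2:ℝ)^(-J.1) ≤ 8 * (2:ℝ)^(-I.1) :=
    oneSide' hn hη0 hη1 hFne hLf hτ0 hτ I J hI hJ hmeet
  have h2 : (2:ℝ)^(-I.1) ≤ 8 * (2:ℝ)^(-J.1) := by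
    obtain ⟨z, hz1, hz2⟩ := hmeet
    exact oneSide' hn hη0 hη1 hFne hLf hτ0 hτ J I hJ hI ⟨z, hz2, hz1⟩
  refine ⟨?_, h2⟩
  rw [show ((8:ℝ))⁻¹ = 1/8 by norm_num]
  linarith

end QCMGP
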